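/- Let 0 ≤ θ < 1 and C ≥ 1, and let A : ℤ₊ × ℤ₊ → ℂ satisfy: (i) |A(r, n₁·n)| ≤ |A(r, n₁)|·|A(1, n)| for all positive integers r, n₁, n such that every prime factor of n₁ divides r and gcd(n, r) = 1; (ii) |A(r, n₁)| ≤ C·(r·n₁)^θ for all positive integers r, n₁ such that every prime factor of n₁ divides r; (iii) ∑_{n ≤ x} |A(1,n)|² ≤ C·x for all real x ≥ 1. Then for every ε > 0 there exists a constant C′ = C′(C, θ, ε) such that for all positive integers r and all real N ≥ 1, ∑_{N < n ≤ 2N} |A(r,n)| ≤ C′·r^{θ+ε}·N. -/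

import Mathlib

/-- Coprimality of the non-smooth part. -/
lemma coprime_div_gcd_pow (r n : ℕ) (hr : 0 < r) (hn : 0 < n) :
    Nat.Coprime (n / Nat.gcd n (r ^ n)) r := by
  set a := Nat.gcd n (r ^ n) with ha
  have hadvd : a ∣ n := Nat.gcd_dvd_left _ _
  rw [Nat.coprime_comm]
  rw [Nat.coprime_iff_gcd_eq_one]
  by_contra hne
  obtain ⟨p, hp, hpd⟩ := Nat.exists_prime_and_dvd hne
  obtain ⟨hpr, hpb⟩ := Nat.dvd_gcd_iff.mp hpd
  have hn0 : n ≠ 0 := hn.ne'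
  have hr0 : r ^ n ≠ 0 := pow_ne_zero _ hr.ne'
  have hfa : a.factorization p = n.factorization p := by
    rw [ha, Nat.factorization_gcd hn0 hr0]
    simp only [Finsupp.inf_apply]
    rw [Nat.factorization_pow]
    refine min_eq_left ?_
    have h1 : 1 ≤ r.factorization p := (Nat.Prime.factorization_pos_of_dvd hp hr.ne' hpr)
    calc n.factorization p ≤ n := (Nat.factorization_lt p hn0).le
    _ = n * 1 := (mul_one n).symm
    _ ≤ n * r.factorization p := by exact Nat.mul_le_mul_left n h1
  have hb0 : (n / a) ≠ 0 := by
    have : 0 < a := Nat.gcd_pos_of_pos_left _ hn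
    exact Nat.ne_of_gt (Nat.div_pos (Nat.le_of_dvd hn hadvd) this)
  have := Nat.Prime.factorization_pos_of_dvd hp hb0 hpb
  rw [Nat.factorization_div hadvd] at this
  simp only [Finsupp.coe_tsub, Pi.sub_apply, hfa] at this
  omega


open Finset in
/-- Bound on sums of `a^(θ-1)` over `r`-factored numbers. -/
lemma smooth_sum_bound (θ ε : ℝ) (hθ0 : 0 ≤ θ) (hθ1 : θ < 1) (hε : 0 < ε) :
    ∃ K : ℝ, 1 ≤ K ∧ ∀ r : ℕ, 0 < r → ∀ t : Finset ℕ,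
      (∀ a ∈ t, a ∈ Nat.factoredNumbers r.primeFactors) →
      ∑ a ∈ t, (a : ℝ) ^ (θ - 1) ≤ K * (r : ℝ) ^ ε := by
  have hθ1' : θ - 1 < 0 := by linarith
  have h2 : (2:ℝ) ^ (θ - 1) < 1 :=
    Real.rpow_lt_one_of_one_lt_of_neg one_lt_two hθ1'
  have h2pos : (0:ℝ) < 2 ^ (θ - 1) := Real.rpow_pos_of_pos two_pos _
  set c : ℝ := (1 - (2:ℝ) ^ (θ - 1))⁻¹ with hc
  have hc1 : 1 ≤ c := by
    rw [hc, le_inv_comm₀ one_pos (by linarith)]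
    linarith
  set P₀ : ℕ := max ⌈(2:ℝ) ^ ((1:ℝ)/(1-θ))⌉₊ ⌈(2:ℝ) ^ ((1:ℝ)/ε)⌉₊ with hP₀
  refine ⟨c ^ (P₀ + 1), one_le_pow₀ hc1, fun r hr t ht => ?_⟩
  -- the multiplicative function n ↦ n^(θ-1)
  set f : ℕ →* ℝ :=
    { toFun := fun n => (n : ℝ) ^ (θ - 1)
      map_one' := by simp
      map_mul' := fun m n => by
        push_cast
        exact Real.mul_rpow (by positivity) (by positivity) } with hf
  have hnorm : ∀ {p : ℕ}, p.Prime → ‖f p‖ < 1 := by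
    intro p hp
    have : (1:ℝ) < p := by exact_mod_cast hp.one_lt
    show ‖(p:ℝ) ^ (θ-1)‖ < 1
    rw [Real.norm_of_nonneg (Real.rpow_nonneg (by positivity) _)]
    exact Real.rpow_lt_one_of_one_lt_of_neg this hθ1'
  obtain ⟨hsumm, hHasSum⟩ :=
    EulerProduct.summable_and_hasSum_factoredNumbers_prod_filter_prime_geometric
      hnorm r.primeFactors
  rw [Finset.filter_true_of_mem (fun p hp => Nat.prime_of_mem_primeFactors hp)] at hHasSum
  -- finite sum ≤ Euler product
  have hstep1 : ∑ a ∈ t, (a : ℝ) ^ (θ - 1) ≤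
      ∏ p ∈ r.primeFactors, (1 - f p)⁻¹ := by
    have h1 := sum_le_hasSum (t.subtype (· ∈ Nat.factoredNumbers r.primeFactors))
      (fun _ _ => Real.rpow_nonneg (by positivity) _) hHasSum
    have heq : ∑ x ∈ t.subtype (· ∈ Nat.factoredNumbers r.primeFactors), ((x:ℕ):ℝ) ^ (θ - 1)
        = ∑ a ∈ t, (a:ℝ) ^ (θ - 1) := Finset.sum_subtype_of_mem (p := (· ∈ Nat.factoredNumbers r.primeFactors)) (fun a : ℕ => (a:ℝ) ^ (θ - 1)) ht
    exact heq.symm.trans_le h1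
  -- bound on each Euler factor
  have hfac : ∀ p : ℕ, p.Prime → (0 < 1 - f p ∧ (1 - f p)⁻¹ ≤ c) := by
    intro p hp
    have hp2 : (2:ℝ) ≤ p := by exact_mod_cast hp.two_le
    have hle : (p:ℝ) ^ (θ - 1) ≤ (2:ℝ) ^ (θ - 1) :=
      Real.rpow_le_rpow_of_nonpos two_pos hp2 hθ1'.le
    have hfp : f p = (p:ℝ) ^ (θ - 1) := rfl
    constructor
    · rw [hfp]; linarith
    · rw [hfp]
      exact inv_anti₀ (by linarith) (by linarith)
  have hlarge : ∀ p : ℕ, p.Prime → P₀ < p → (1 - f p)⁻¹ ≤ (p:ℝ) ^ ε := by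
    intro p hp hpP
    have hp1 : (1:ℝ) ≤ p := by exact_mod_cast hp.one_le
    have hbig : ∀ δ : ℝ, 0 < δ → ⌈(2:ℝ) ^ ((1:ℝ)/δ)⌉₊ ≤ P₀ → (2:ℝ) ≤ (p:ℝ) ^ δ := by
      intro δ hδ hle
      have h1 : (2:ℝ) ^ ((1:ℝ)/δ) ≤ (p:ℝ) := by
        calc (2:ℝ) ^ ((1:ℝ)/δ) ≤ (⌈(2:ℝ) ^ ((1:ℝ)/δ)⌉₊ : ℝ) := Nat.le_ceil _
        _ ≤ (P₀ : ℝ) := by exact_mod_cast hle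
        _ ≤ (p:ℝ) := by exact_mod_cast hpP.le
      calc (2:ℝ) = ((2:ℝ) ^ ((1:ℝ)/δ)) ^ δ := by
            rw [← Real.rpow_mul (by norm_num), one_div_mul_cancel hδ.ne', Real.rpow_one]
        _ ≤ (p:ℝ) ^ δ := Real.rpow_le_rpow (by positivity) h1 hδ.le
    have h1θ : (2:ℝ) ≤ (p:ℝ) ^ (1 - θ) := hbig (1-θ) (by linarith) (le_max_left _ _)
    have hεp : (2:ℝ) ≤ (p:ℝ) ^ ε := hbig ε hε (le_max_right _ _)
    have hfp : f p = ((p:ℝ) ^ (1 - θ))⁻¹ := by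
      show (p:ℝ) ^ (θ - 1) = _
      rw [← Real.rpow_neg_one ((p:ℝ) ^ (1-θ)), ← Real.rpow_mul (by positivity)]
      ring_nf
    have hfp2 : f p ≤ 1/2 := by
      rw [hfp]
      rw [inv_le_comm₀ (by linarith) (by norm_num)]
      linarith
    have : (0:ℝ) < 1 - f p := by linarith
    calc (1 - f p)⁻¹ ≤ (2⁻¹)⁻¹ := inv_anti₀ (by norm_num) (by linarith)
      _ = 2 := by norm_num
      _ ≤ (p:ℝ) ^ ε := hεp
  -- split the product
  refine hstep1.trans ?_
  rw [← Finset.prod_filter_mul_prod_filter_not r.primeFactors (· ≤ P₀)]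
  have hsmall : ∏ p ∈ r.primeFactors.filter (· ≤ P₀), (1 - f p)⁻¹ ≤ c ^ (P₀ + 1) := by
    calc ∏ p ∈ r.primeFactors.filter (· ≤ P₀), (1 - f p)⁻¹
        ≤ ∏ p ∈ r.primeFactors.filter (· ≤ P₀), c := by
          refine Finset.prod_le_prod (fun p hp => ?_) (fun p hp => ?_)
          · exact inv_nonneg.mpr (hfac p (Nat.prime_of_mem_primeFactors
              (Finset.mem_filter.mp hp).1)).1.le
          · exact (hfac p (Nat.prime_of_mem_primeFactors (Finset.mem_filter.mp hp).1)).2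
      _ = c ^ (r.primeFactors.filter (· ≤ P₀)).card := Finset.prod_const c
      _ ≤ c ^ (P₀ + 1) := by
          refine pow_le_pow_right₀ hc1 ?_
          calc (r.primeFactors.filter (· ≤ P₀)).card ≤ (Finset.Iic P₀).card :=
                Finset.card_le_card (fun p hp => Finset.mem_Iic.mpr (Finset.mem_filter.mp hp).2)
            _ = P₀ + 1 := Nat.card_Iic P₀
  have hlargeprod : ∏ p ∈ r.primeFactors.filter (¬ · ≤ P₀), (1 - f p)⁻¹ ≤ (r:ℝ) ^ ε := by
    calc ∏ p ∈ r.primeFactors.filter (¬ · ≤ P₀), (1 - f p)⁻¹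
        ≤ ∏ p ∈ r.primeFactors.filter (¬ · ≤ P₀), (p:ℝ) ^ ε := by
          refine Finset.prod_le_prod (fun p hp => ?_) (fun p hp => ?_)
          · exact inv_nonneg.mpr (hfac p (Nat.prime_of_mem_primeFactors
              (Finset.mem_filter.mp hp).1)).1.le
          · exact hlarge p (Nat.prime_of_mem_primeFactors (Finset.mem_filter.mp hp).1)
              (Nat.lt_of_not_le (Finset.mem_filter.mp hp).2)
      _ = ((∏ p ∈ r.primeFactors.filter (¬ · ≤ P₀), p : ℕ) : ℝ) ^ ε := by
          rw [Nat.cast_prod, ← Real.finset_prod_rpow _ _ (fun p _ => by positivity)]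
      _ ≤ (r:ℝ) ^ ε := by
          refine Real.rpow_le_rpow (by positivity) ?_ hε.le
          have hdvd : (∏ p ∈ r.primeFactors.filter (¬ · ≤ P₀), p) ∣ r :=
            dvd_trans (Finset.prod_dvd_prod_of_subset _ _ _ (Finset.filter_subset _ _))
              (Nat.prod_primeFactors_dvd r)
          exact_mod_cast Nat.le_of_dvd hr hdvd
  have h1 : (0:ℝ) ≤ ∏ p ∈ r.primeFactors.filter (¬ · ≤ P₀), (1 - f p)⁻¹ :=
    Finset.prod_nonneg (fun p hp => inv_nonneg.mpr (hfac p (Nat.prime_of_mem_primeFactors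
      (Finset.mem_filter.mp hp).1)).1.le)
  calc _ ≤ c ^ (P₀+1) * ((r:ℝ) ^ ε) :=
        mul_le_mul hsmall hlargeprod h1 (by positivity)
    _ = c ^ (P₀+1) * (r:ℝ) ^ ε := rfl



/-- **First-moment bound for `GL(3)` Fourier coefficients.**
Abstracting Hecke multiplicativity, the Ramanujan-type bound and the
Rankin–Selberg second moment, one has `∑_{N < n ≤ 2N} |A(r,n)| ≪_ε r^{θ+ε} N`. -/
theorem first_moment_bound (θ C : ℝ) (hθ0 : 0 ≤ θ) (hθ1 : θ < 1) (hC : 1 ≤ C)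
    (A : ℕ → ℕ → ℂ)
    (hmult : ∀ r n₁ n : ℕ, 0 < r → 0 < n₁ → 0 < n →
      (∀ p : ℕ, p.Prime → p ∣ n₁ → p ∣ r) → Nat.gcd n r = 1 →
      ‖A r (n₁ * n)‖ ≤ ‖A r n₁‖ * ‖A 1 n‖)
    (hram : ∀ r n₁ : ℕ, 0 < r → 0 < n₁ →
      (∀ p : ℕ, p.Prime → p ∣ n₁ → p ∣ r) →
      ‖A r n₁‖ ≤ C * ((r * n₁ : ℕ) : ℝ) ^ θ)
    (hRS : ∀ x : ℝ, 1 ≤ x →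
      ∑ n ∈ Finset.Icc 1 ⌊x⌋₊, ‖A 1 n‖ ^ 2 ≤ C * x) :
    ∀ ε : ℝ, 0 < ε → ∃ C' : ℝ, ∀ r : ℕ, 0 < r → ∀ N : ℝ, 1 ≤ N →
      ∑ n ∈ Finset.Ioc ⌊N⌋₊ ⌊2 * N⌋₊, ‖A r n‖
        ≤ C' * (r : ℝ) ^ (θ + ε) * N := by
  intro ε hε
  obtain ⟨K, hK1, hKb⟩ := smooth_sum_bound θ ε hθ0 hθ1 hε
  have hC0 : (0:ℝ) ≤ C := by linarith
  have hsC : (0:ℝ) ≤ Real.sqrt C := Real.sqrt_nonneg C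
  refine ⟨2 * (C * Real.sqrt C * K), fun r hr N hN => ?_⟩
  have hr0 : (0:ℝ) < r := by exact_mod_cast hr
  set M : ℕ := ⌊2 * N⌋₊ with hMdef
  have hM2N : (M : ℝ) ≤ 2 * N := Nat.floor_le (by linarith)
  -- the smooth part
  set sp : ℕ → ℕ := fun n => Nat.gcd n (r ^ n) with hsp
  set Sm : Finset ℕ :=
    (Finset.Icc 1 M).filter (· ∈ Nat.factoredNumbers r.primeFactors) with hSm
  set F : ℕ × ℕ → ℝ :=
    fun q => C * (r:ℝ) ^ θ * (q.1:ℝ) ^ θ * ‖A 1 q.2‖ with hF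
  set P : Finset (ℕ × ℕ) :=
    (Sm ×ˢ Finset.Icc 1 M).filter (fun q => q.1 * q.2 ≤ M) with hP
  set T : Finset ℕ := Finset.Ioc ⌊N⌋₊ M with hT
  have hFnn : ∀ q : ℕ × ℕ, 0 ≤ F q := fun q => by
    have := norm_nonneg (A 1 q.2)
    have h1 : (0:ℝ) ≤ (r:ℝ) ^ θ := Real.rpow_nonneg hr0.le _
    have h2 : (0:ℝ) ≤ (q.1:ℝ) ^ θ := Real.rpow_nonneg (Nat.cast_nonneg _) _
    positivity
  -- basic facts for n ∈ T
  have hTpos : ∀ n ∈ T, 0 < n := by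
    intro n hn
    have := (Finset.mem_Ioc.mp hn).1
    omega
  have hspdvd : ∀ n, sp n ∣ n := fun n => Nat.gcd_dvd_left _ _
  have hsppos : ∀ n, 0 < n → 0 < sp n := by
    intro n hn
    exact Nat.gcd_pos_of_pos_left _ hn
  have hspfac : ∀ n, ∀ p : ℕ, p.Prime → p ∣ sp n → p ∣ r := by
    intro n p hp hdvd
    exact hp.dvd_of_dvd_pow (hdvd.trans (Nat.gcd_dvd_right _ _))
  have hsp_mul : ∀ n, sp n * (n / sp n) = n := fun n => Nat.mul_div_cancel' (hspdvd n)
  have hcop : ∀ n, 0 < n → Nat.Coprime (n / sp n) r := fun n hn =>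
    coprime_div_gcd_pow r n hr hn
  -- step A : pointwise bound
  have key : ∀ n ∈ T, ‖A r n‖ ≤ F (sp n, n / sp n) := by
    intro n hn
    have hnpos := hTpos n hn
    have hbpos : 0 < n / sp n := Nat.div_pos (Nat.le_of_dvd hnpos (hspdvd n)) (hsppos n hnpos)
    calc ‖A r n‖ = ‖A r (sp n * (n / sp n))‖ := by rw [hsp_mul]
      _ ≤ ‖A r (sp n)‖ * ‖A 1 (n / sp n)‖ :=
          hmult r (sp n) (n / sp n) hr (hsppos n hnpos) hbpos (hspfac n) (hcop n hnpos)
      _ ≤ (C * (r:ℝ) ^ θ * ((sp n : ℕ):ℝ) ^ θ) * ‖A 1 (n / sp n)‖ := by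
          refine mul_le_mul_of_nonneg_right ?_ (norm_nonneg _)
          have := hram r (sp n) hr (hsppos n hnpos) (hspfac n)
          calc ‖A r (sp n)‖ ≤ C * ((r * sp n : ℕ) : ℝ) ^ θ := this
            _ = C * (r:ℝ) ^ θ * ((sp n : ℕ):ℝ) ^ θ := by
                push_cast
                rw [Real.mul_rpow (Nat.cast_nonneg _) (Nat.cast_nonneg _)]
                ring
      _ = F (sp n, n / sp n) := by rw [hF]
  -- the injection n ↦ (sp n, n / sp n)
  set e : ℕ → ℕ × ℕ := fun n => (sp n, n / sp n) with he
  have hinj : ∀ x ∈ T, ∀ y ∈ T, e x = e y → x = y := by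
    intro x hx y hy hxy
    have h1 : sp x = sp y := congrArg Prod.fst hxy
    have h2 : x / sp x = y / sp y := congrArg Prod.snd hxy
    rw [← hsp_mul x, ← hsp_mul y, h2, h1]
  have himage : T.image e ⊆ P := by
    intro q hq
    obtain ⟨n, hn, rfl⟩ := Finset.mem_image.mp hq
    have hnpos := hTpos n hn
    have hnM : n ≤ M := (Finset.mem_Ioc.mp hn).2
    have haM : sp n ≤ M := le_trans (Nat.le_of_dvd hnpos (hspdvd n)) hnM
    have hbM : n / sp n ≤ M := le_trans (Nat.div_le_self _ _) hnM
    have hbpos : 0 < n / sp n := Nat.div_pos (Nat.le_of_dvd hnpos (hspdvd n)) (hsppos n hnpos)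
    refine Finset.mem_filter.mpr ⟨Finset.mem_product.mpr ⟨?_, ?_⟩, ?_⟩
    · refine Finset.mem_filter.mpr ⟨Finset.mem_Icc.mpr ⟨hsppos n hnpos, haM⟩, ?_⟩
      refine Nat.mem_factoredNumbers_of_primeFactors_subset (hsppos n hnpos).ne' ?_
      intro p hp
      have hp1 := Nat.prime_of_mem_primeFactors hp
      have hp2 := Nat.dvd_of_mem_primeFactors hp
      exact Nat.mem_primeFactors.mpr ⟨hp1, hspfac n p hp1 hp2, hr.ne'⟩
    · exact Finset.mem_Icc.mpr ⟨hbpos, hbM⟩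
    · show sp n * (n / sp n) ≤ M
      rw [hsp_mul]
      exact hnM
  -- step B : inner sums
  have hsplit : ∑ q ∈ P, F q
      = ∑ a ∈ Sm, ∑ b ∈ (Finset.Icc 1 M).filter (fun b => a * b ≤ M), F (a, b) := by
    rw [hP, Finset.sum_filter, Finset.sum_product]
    exact Finset.sum_congr rfl fun a _ => (Finset.sum_filter _ _).symm
  have hinner : ∀ a ∈ Sm,
      ∑ b ∈ (Finset.Icc 1 M).filter (fun b => a * b ≤ M), ‖A 1 b‖
        ≤ Real.sqrt C * ((M:ℝ) / a) := by
    intro a ha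
    obtain ⟨haIcc, -⟩ := Finset.mem_filter.mp ha
    obtain ⟨ha1, haM⟩ := Finset.mem_Icc.mp haIcc
    have hapos : (0:ℝ) < a := by exact_mod_cast ha1
    set x : ℝ := (M:ℝ) / a with hx
    have hx1 : 1 ≤ x := (one_le_div hapos).mpr (by exact_mod_cast haM)
    have hfloor : ⌊x⌋₊ = M / a := by
      rw [hx, Nat.floor_div_natCast, Nat.floor_natCast]
    have hsub : (Finset.Icc 1 M).filter (fun b => a * b ≤ M) ⊆ Finset.Icc 1 (M / a) := by
      intro b hb
      obtain ⟨hb1, hb2⟩ := Finset.mem_filter.mp hb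
      refine Finset.mem_Icc.mpr ⟨(Finset.mem_Icc.mp hb1).1, ?_⟩
      exact (Nat.le_div_iff_mul_le ha1).mpr (by rwa [mul_comm] at hb2)
    have h1 : ∑ b ∈ (Finset.Icc 1 M).filter (fun b => a * b ≤ M), ‖A 1 b‖
        ≤ ∑ b ∈ Finset.Icc 1 (M / a), ‖A 1 b‖ :=
      Finset.sum_le_sum_of_subset_of_nonneg hsub (fun b _ _ => norm_nonneg _)
    set S : ℝ := ∑ b ∈ Finset.Icc 1 (M / a), ‖A 1 b‖ with hS
    have hSnn : 0 ≤ S := Finset.sum_nonneg fun b _ => norm_nonneg _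
    have hcard : ((Finset.Icc 1 (M / a)).card : ℝ) = (M / a : ℕ) := by
      rw [Nat.card_Icc]; norm_num
    have hCS : S ^ 2 ≤ ((M / a : ℕ) : ℝ) * ∑ b ∈ Finset.Icc 1 (M / a), ‖A 1 b‖ ^ 2 := by
      have := sq_sum_le_card_mul_sum_sq (s := Finset.Icc 1 (M / a))
        (f := fun b => ‖A 1 b‖)
      rwa [hcard] at this
    have hRS' : ∑ b ∈ Finset.Icc 1 (M / a), ‖A 1 b‖ ^ 2 ≤ C * x := by
      have := hRS x hx1
      rwa [hfloor] at this
    have hKle : ((M / a : ℕ) : ℝ) ≤ x := by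
      rw [hx]; exact Nat.cast_div_le
    have hSsq : S ^ 2 ≤ C * x ^ 2 := by
      calc S ^ 2 ≤ ((M / a : ℕ) : ℝ) * (C * x) := le_trans hCS
            (mul_le_mul_of_nonneg_left hRS' (Nat.cast_nonneg _))
        _ ≤ x * (C * x) := mul_le_mul_of_nonneg_right hKle (by positivity)
        _ = C * x ^ 2 := by ring
    have hSle : S ≤ Real.sqrt C * x := by
      have h2 : S = Real.sqrt (S ^ 2) := (Real.sqrt_sq hSnn).symm
      rw [h2]
      calc Real.sqrt (S ^ 2) ≤ Real.sqrt (C * x ^ 2) := Real.sqrt_le_sqrt hSsq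
        _ = Real.sqrt C * x := by
            rw [Real.sqrt_mul hC0, Real.sqrt_sq (by linarith)]
    exact h1.trans hSle
  -- per-`a` bound
  have hterm : ∀ a ∈ Sm,
      ∑ b ∈ (Finset.Icc 1 M).filter (fun b => a * b ≤ M), F (a, b)
        ≤ (C * Real.sqrt C * (M:ℝ) * (r:ℝ) ^ θ) * (a:ℝ) ^ (θ - 1) := by
    intro a ha
    obtain ⟨haIcc, -⟩ := Finset.mem_filter.mp ha
    obtain ⟨ha1, haM⟩ := Finset.mem_Icc.mp haIcc
    have hapos : (0:ℝ) < a := by exact_mod_cast ha1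
    have hrθ : (0:ℝ) ≤ (r:ℝ) ^ θ := Real.rpow_nonneg hr0.le _
    have haθ : (0:ℝ) ≤ (a:ℝ) ^ θ := Real.rpow_nonneg hapos.le _
    calc ∑ b ∈ (Finset.Icc 1 M).filter (fun b => a * b ≤ M), F (a, b)
        = (C * (r:ℝ) ^ θ * (a:ℝ) ^ θ) *
            ∑ b ∈ (Finset.Icc 1 M).filter (fun b => a * b ≤ M), ‖A 1 b‖ := by
          rw [Finset.mul_sum]
      _ ≤ (C * (r:ℝ) ^ θ * (a:ℝ) ^ θ) * (Real.sqrt C * ((M:ℝ) / a)) :=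
          mul_le_mul_of_nonneg_left (hinner a ha) (by positivity)
      _ = (C * Real.sqrt C * (M:ℝ) * (r:ℝ) ^ θ) * ((a:ℝ) ^ θ / a) := by ring
      _ = (C * Real.sqrt C * (M:ℝ) * (r:ℝ) ^ θ) * (a:ℝ) ^ (θ - 1) := by
          rw [Real.rpow_sub_one hapos.ne']
  -- assemble
  have hSmfac : ∀ a ∈ Sm, a ∈ Nat.factoredNumbers r.primeFactors := fun a ha =>
    (Finset.mem_filter.mp ha).2
  have hmain : ∑ n ∈ T, ‖A r n‖
      ≤ (C * Real.sqrt C * (M:ℝ) * (r:ℝ) ^ θ) * (K * (r:ℝ) ^ ε) := by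
    calc ∑ n ∈ T, ‖A r n‖ ≤ ∑ n ∈ T, F (e n) := Finset.sum_le_sum key
      _ = ∑ q ∈ T.image e, F q := (Finset.sum_image hinj).symm
      _ ≤ ∑ q ∈ P, F q :=
          Finset.sum_le_sum_of_subset_of_nonneg himage (fun q _ _ => hFnn q)
      _ = ∑ a ∈ Sm, ∑ b ∈ (Finset.Icc 1 M).filter (fun b => a * b ≤ M), F (a, b) := hsplit
      _ ≤ ∑ a ∈ Sm, (C * Real.sqrt C * (M:ℝ) * (r:ℝ) ^ θ) * (a:ℝ) ^ (θ - 1) :=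
          Finset.sum_le_sum hterm
      _ = (C * Real.sqrt C * (M:ℝ) * (r:ℝ) ^ θ) * ∑ a ∈ Sm, (a:ℝ) ^ (θ - 1) := by
          rw [Finset.mul_sum]
      _ ≤ (C * Real.sqrt C * (M:ℝ) * (r:ℝ) ^ θ) * (K * (r:ℝ) ^ ε) := by
          refine mul_le_mul_of_nonneg_left (hKb r hr Sm hSmfac) ?_
          have : (0:ℝ) ≤ (r:ℝ) ^ θ := Real.rpow_nonneg hr0.le _
          positivity
  refine hmain.trans ?_
  have hrpow : (r:ℝ) ^ θ * (r:ℝ) ^ ε = (r:ℝ) ^ (θ + ε) := (Real.rpow_add hr0 θ ε).symm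
  have hfinal : (C * Real.sqrt C * (M:ℝ) * (r:ℝ) ^ θ) * (K * (r:ℝ) ^ ε)
      = (C * Real.sqrt C * K) * ((r:ℝ) ^ (θ + ε)) * (M:ℝ) := by
    rw [← hrpow]; ring
  rw [hfinal]
  have hnn : (0:ℝ) ≤ (C * Real.sqrt C * K) * ((r:ℝ) ^ (θ + ε)) := by
    have : (0:ℝ) ≤ (r:ℝ) ^ (θ + ε) := Real.rpow_nonneg hr0.le _
    have hK0 : (0:ℝ) ≤ K := by linarith
    positivity
  calc (C * Real.sqrt C * K) * ((r:ℝ) ^ (θ + ε)) * (M:ℝ)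
      ≤ (C * Real.sqrt C * K) * ((r:ℝ) ^ (θ + ε)) * (2 * N) :=
        mul_le_mul_of_nonneg_left hM2N hnn
    _ = 2 * (C * Real.sqrt C * K) * (r:ℝ) ^ (θ + ε) * N := by ring
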